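/- Let F = {f_n}_{n=1}^N be unit-norm vectors in C^M and let P_n be the orthogonal projection onto the orthogonal complement of f_n. Then ∑_{n=1}^N ‖P_n FF* f_n‖² ≤ 4N·‖FF* − (N/M)I‖_HS². -/

import Mathlib

noncomputable section
open scoped InnerProductSpace

def col {M N : ℕ} (F : Matrix (Fin M) (Fin N) ℂ) (n : Fin N) : EuclideanSpace ℂ (Fin M) :=
  (WithLp.equiv 2 (Fin M → ℂ)).symm (fun m => F m n)

def hsq {M N : ℕ} (A : Matrix (Fin M) (Fin N) ℂ) : ℝ := ∑ i, ∑ j, ‖A i j‖ ^ 2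

/-- Frame operator applied to a vector. -/
def frameOp {M N : ℕ} (F : Matrix (Fin M) (Fin N) ℂ) (x : EuclideanSpace ℂ (Fin M)) :
    EuclideanSpace ℂ (Fin M) :=
  (WithLp.equiv 2 (Fin M → ℂ)).symm ((F * F.conjTranspose).mulVec x)

lemma hsq_nonneg {M N : ℕ} (A : Matrix (Fin M) (Fin N) ℂ) : 0 ≤ hsq A := by
  apply Finset.sum_nonneg; intro i _
  apply Finset.sum_nonneg; intro j _
  positivity

/-- Cauchy–Schwarz bound for matrix-vector products, entrywise. -/
lemma mulVec_sq_le {M : ℕ} (A : Matrix (Fin M) (Fin M) ℂ) (x : Fin M → ℂ) :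
    ∑ i, ‖A.mulVec x i‖ ^ 2 ≤ hsq A * ∑ j, ‖x j‖ ^ 2 := by
  have h : ∀ i : Fin M, ‖A.mulVec x i‖ ^ 2 ≤ (∑ j, ‖A i j‖ ^ 2) * ∑ j, ‖x j‖ ^ 2 := by
    intro i
    have h1 : ‖A.mulVec x i‖ ≤ ∑ j, ‖A i j‖ * ‖x j‖ := by
      calc ‖A.mulVec x i‖ = ‖∑ j, A i j * x j‖ := rfl
        _ ≤ ∑ j, ‖A i j * x j‖ := norm_sum_le _ _
        _ = ∑ j, ‖A i j‖ * ‖x j‖ := by simp [norm_mul]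
    have h2 : (∑ j, ‖A i j‖ * ‖x j‖) ^ 2 ≤ (∑ j, ‖A i j‖ ^ 2) * ∑ j, ‖x j‖ ^ 2 :=
      Finset.sum_mul_sq_le_sq_mul_sq _ _ _
    calc ‖A.mulVec x i‖ ^ 2 ≤ (∑ j, ‖A i j‖ * ‖x j‖) ^ 2 := by
          apply pow_le_pow_left₀ (norm_nonneg _) h1
      _ ≤ _ := h2
  calc ∑ i, ‖A.mulVec x i‖ ^ 2 ≤ ∑ i, (∑ j, ‖A i j‖ ^ 2) * ∑ j, ‖x j‖ ^ 2 :=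
        Finset.sum_le_sum fun i _ => h i
    _ = hsq A * ∑ j, ‖x j‖ ^ 2 := by rw [hsq, Finset.sum_mul]

theorem gradient_norm_upper_bound
    (M N : ℕ) (F : Matrix (Fin M) (Fin N) ℂ)
    (hunit : ∀ n : Fin N, ‖col F n‖ = 1) :
    ∑ n : Fin N,
        ‖frameOp F (col F n) - ⟪col F n, frameOp F (col F n)⟫_ℂ • col F n‖ ^ 2
      ≤ 4 * N * hsq (F * F.conjTranspose - ((N : ℂ) / M) • (1 : Matrix (Fin M) (Fin M) ℂ)) := by
  set c : ℂ := (N : ℂ) / M with hc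
  set A : Matrix (Fin M) (Fin M) ℂ := F * F.conjTranspose - c • 1 with hA
  have key : ∀ n : Fin N,
      ‖frameOp F (col F n) - ⟪col F n, frameOp F (col F n)⟫_ℂ • col F n‖ ^ 2 ≤ 4 * hsq A := by
    intro n
    set f := col F n with hf
    set v := frameOp F f with hv
    set w : EuclideanSpace ℂ (Fin M) :=
      (WithLp.equiv 2 (Fin M → ℂ)).symm (A.mulVec ((WithLp.equiv 2 (Fin M → ℂ)) f)) with hw
    have hwv : w = v - c • f := by
      apply (WithLp.equiv 2 (Fin M → ℂ)).injective
      funext i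
      simp only [hw, hv, frameOp, hA, Matrix.sub_mulVec, Matrix.smul_mulVec,
        Matrix.one_mulVec]
      simp [WithLp.equiv_symm_apply]
    have hff : ⟪f, f⟫_ℂ = 1 := by
      rw [inner_self_eq_norm_sq_to_K, hunit n]
      norm_num
    have heq : v - ⟪f, v⟫_ℂ • f = w - ⟪f, w⟫_ℂ • f := by
      rw [hwv, inner_sub_right, inner_smul_right, hff, mul_one]
      module
    have hnorm : ‖v - ⟪f, v⟫_ℂ • f‖ ≤ 2 * ‖w‖ := by
      rw [heq]
      calc ‖w - ⟪f, w⟫_ℂ • f‖ ≤ ‖w‖ + ‖⟪f, w⟫_ℂ • f‖ := norm_sub_le _ _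
        _ = ‖w‖ + ‖⟪f, w⟫_ℂ‖ * ‖f‖ := by rw [norm_smul]
        _ ≤ ‖w‖ + (‖f‖ * ‖w‖) * ‖f‖ := by
            gcongr; exact norm_inner_le_norm _ _
        _ = 2 * ‖w‖ := by rw [hunit n]; ring
    have hwsq : ‖w‖ ^ 2 ≤ hsq A := by
      have h1 : ‖w‖ ^ 2 = ∑ i, ‖A.mulVec ((WithLp.equiv 2 (Fin M → ℂ)) f) i‖ ^ 2 := by
        rw [hw, EuclideanSpace.norm_eq]
        rw [Real.sq_sqrt (by positivity)]
        rfl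
      have h2 : ∑ j, ‖(WithLp.equiv 2 (Fin M → ℂ)) f j‖ ^ 2 = 1 := by
        have h := hunit n
        rw [EuclideanSpace.norm_eq] at h
        have hnn : (0:ℝ) ≤ ∑ j, ‖f j‖ ^ 2 := Finset.sum_nonneg fun j _ => sq_nonneg _
        have h3 : ∑ j, ‖f j‖ ^ 2 = 1 := by nlinarith [Real.sq_sqrt hnn]
        simpa using h3
      calc ‖w‖ ^ 2 = ∑ i, ‖A.mulVec ((WithLp.equiv 2 (Fin M → ℂ)) f) i‖ ^ 2 := h1
        _ ≤ hsq A * ∑ j, ‖(WithLp.equiv 2 (Fin M → ℂ)) f j‖ ^ 2 := mulVec_sq_le _ _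
        _ = hsq A := by rw [h2, mul_one]
    calc ‖v - ⟪f, v⟫_ℂ • f‖ ^ 2 ≤ (2 * ‖w‖) ^ 2 := by
          apply pow_le_pow_left₀ (norm_nonneg _) hnorm
      _ = 4 * ‖w‖ ^ 2 := by ring
      _ ≤ 4 * hsq A := by linarith
  calc ∑ n : Fin N, ‖frameOp F (col F n) - ⟪col F n, frameOp F (col F n)⟫_ℂ • col F n‖ ^ 2
      ≤ ∑ _n : Fin N, 4 * hsq A := Finset.sum_le_sum fun n _ => key n
    _ = 4 * N * hsq A := by
        rw [Finset.sum_const]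
        simp [Finset.card_univ]
        ring
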